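/- arXiv:2105.05172 — 3 statements merged into one kernel-verified Lean document; each statement's English description precedes it below -/
import Mathlib

section
/- Let X_1,...,X_n be i.i.d. random variables over a finite alphabet and let w be a nonoverlapping word of length m with P(w) the probability that a fixed window of length m equals w. Let N_w be the number of occurrences of w in X_1...X_n. Then for every s >= 0, P(N_w = s) = sum over k with s <= k and n - m*k >= 0 of (-1)^{k-s} * C(n - m*k + k, k) * C(k, s) * P(w)^k. -/
open MeasureTheory
open scoped Classical

/-- `w` occurs in `z` at position `i` (0-indexed) as a contiguous substring. -/
def OccursAt {α : Type*} (z w : List α) (i : ℕ) : Prop :=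
  i + w.length ≤ z.length ∧ (z.drop i).take w.length = w

/-- A word `w` is nonoverlapping if no string of length `< 2|w|` contains two
occurrences of `w` at distinct positions. -/
def Nonoverlapping {α : Type*} (w : List α) : Prop :=
  ¬ ∃ (z : List α) (i j : ℕ), z.length < 2 * w.length ∧ i ≠ j ∧
    OccursAt z w i ∧ OccursAt z w j

/-- The number of occurrences of the word `w` in the string `z`. -/
noncomputable def countOcc {α : Type*} (w z : List α) : ℕ :=
  ((Finset.range z.length).filter (fun i => OccursAt z w i)).card

/-- The probability of the word `w` at a fixed position under the i.i.d. law with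
marginal `μ`. -/
noncomputable def wordProb {α : Type*} [MeasurableSpace α] (μ : Measure α)
    (w : List α) : ℝ :=
  (w.map fun a => (μ {a}).toReal).prod

def spacedSets (m n k : ℕ) : Finset (Finset ℕ) :=
  (Finset.powersetCard k (Finset.range n)).filter
    (fun S => (∀ i ∈ S, i + m ≤ n) ∧ ∀ i ∈ S, ∀ j ∈ S, i < j → i + m ≤ j)

lemma mem_spacedSets {m n k : ℕ} (hm : 1 ≤ m) {S : Finset ℕ} :
    S ∈ spacedSets m n k ↔ S.card = k ∧ (∀ i ∈ S, i + m ≤ n) ∧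
      ∀ i ∈ S, ∀ j ∈ S, i < j → i + m ≤ j := by
  simp only [spacedSets, Finset.mem_filter, Finset.mem_powersetCard]
  constructor
  · rintro ⟨⟨h1, h2⟩, h3, h4⟩; exact ⟨h2, h3, h4⟩
  · rintro ⟨h2, h3, h4⟩
    refine ⟨⟨fun i hi => Finset.mem_range.2 ?_, h2⟩, h3, h4⟩
    have := h3 i hi; omega

lemma spacedSets_zero (m n : ℕ) : spacedSets m n 0 = {∅} := by
  ext S
  simp [spacedSets, Finset.mem_powersetCard, Finset.card_eq_zero]
  intro h; subst h; simp

lemma spacedSets_card (m : ℕ) (hm : 1 ≤ m) : ∀ n k,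
    (spacedSets m n k).card = if m * k ≤ n then (n - m * k + k).choose k else 0 := by
  intro n
  induction n using Nat.strong_induction_on with
  | _ n IH =>
    intro k
    match k with
    | 0 => simp [spacedSets_zero]
    | k + 1 =>
      by_cases hmn : m ≤ n
      · -- split on membership of n - m
        have hsplit := Finset.card_filter_add_card_filter_not
          (s := spacedSets m n (k+1)) (p := fun S => (n - m) ∈ S)
        have h1 : (spacedSets m n (k+1)).filter (fun S => ¬ (n - m) ∈ S) = spacedSets m (n-1) (k+1) := by
          ext S
          simp only [Finset.mem_filter, mem_spacedSets hm]
          constructor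
          · rintro ⟨⟨hc, hb, hs⟩, hnm⟩
            refine ⟨hc, fun i hi => ?_, hs⟩
            have := hb i hi
            have : i ≠ n - m := fun h => hnm (h ▸ hi)
            omega
          · rintro ⟨hc, hb, hs⟩
            refine ⟨⟨hc, fun i hi => by have := hb i hi; omega, hs⟩, fun hmem => ?_⟩
            have := hb _ hmem; omega
        have h2 : ((spacedSets m n (k+1)).filter (fun S => (n - m) ∈ S)).card
            = (spacedSets m (n-m) k).card := by
          apply Finset.card_bij (fun S _ => S.erase (n - m))
          · rintro S hS
            rw [Finset.mem_filter, mem_spacedSets hm] at hS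
            obtain ⟨⟨hc, hb, hs⟩, hmem⟩ := hS
            rw [mem_spacedSets hm]
            refine ⟨by simp [Finset.card_erase_of_mem hmem, hc], fun i hi => ?_,
              fun i hi j hj hij => hs i (Finset.mem_of_mem_erase hi) j (Finset.mem_of_mem_erase hj) hij⟩
            obtain ⟨hine, hiS⟩ := Finset.mem_erase.1 hi
            rcases lt_trichotomy i (n - m) with h | h | h
            · exact hs i hiS (n-m) hmem h
            · exact absurd h hine
            · have := hs (n-m) hmem i hiS h
              have := hb i hiS
              omega
          · rintro S hS T hT hST
            rw [Finset.mem_filter] at hS hT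
            have : insert (n-m) (S.erase (n-m)) = insert (n-m) (T.erase (n-m)) := by rw [hST]
            rwa [Finset.insert_erase hS.2, Finset.insert_erase hT.2] at this
          · rintro S' hS'
            rw [mem_spacedSets hm] at hS'
            obtain ⟨hc, hb, hs⟩ := hS'
            have hnot : (n - m) ∉ S' := by intro h; have := hb _ h; omega
            refine ⟨insert (n-m) S', ?_, by rw [Finset.erase_insert hnot]⟩
            rw [Finset.mem_filter, mem_spacedSets hm]
            refine ⟨⟨by rw [Finset.card_insert_of_notMem hnot, hc], fun i hi => ?_, ?_⟩,
              Finset.mem_insert_self _ _⟩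
            · rcases Finset.mem_insert.1 hi with h | h
              · omega
              · have := hb i h; omega
            · intro i hi j hj hij
              rcases Finset.mem_insert.1 hi with h | h <;> rcases Finset.mem_insert.1 hj with h' | h'
              · omega
              · have := hb j h'; omega
              · have := hb i h; omega
              · exact hs i h j h' hij
        have e1 := IH (n-1) (by omega) (k+1)
        have e2 := IH (n-m) (by omega) k
        rw [h1, h2, e1, e2] at hsplit
        rw [← hsplit]
        have hmm : m * (k+1) = m * k + m := by ring
        by_cases hk : m * (k+1) ≤ n
        · have hk' : m * k ≤ n - m := by omega
          rw [if_pos hk', if_pos hk]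
          by_cases hk2 : m * (k+1) ≤ n - 1
          · rw [if_pos hk2]
            have ha : n - m - m * k + k = n - m * (k+1) + k := by omega
            have hb : n - 1 - m * (k+1) + (k+1) = n - m*(k+1) + k := by omega
            have hc2 : n - m * (k+1) + (k+1) = (n - m*(k+1) + k) + 1 := by omega
            rw [ha, hb, hc2, Nat.choose_succ_succ]
          · rw [if_neg hk2]
            have ha : n - m - m * k + k = k := by omega
            have hb' : n - m * (k+1) + (k+1) = k + 1 := by omega
            rw [ha, hb', Nat.choose_self, Nat.choose_self]
        · have h' : ¬ m * k ≤ n - m := by omega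
          have h'' : ¬ m * (k+1) ≤ n - 1 := by omega
          rw [if_neg hk, if_neg h', if_neg h'']
      · rw [if_neg (by nlinarith)]
        rw [Finset.card_eq_zero]
        ext S
        simp only [mem_spacedSets hm, Finset.notMem_empty, iff_false]
        rintro ⟨hc, hb, -⟩
        have : S.Nonempty := by rw [← Finset.card_pos, hc]; omega
        obtain ⟨i, hi⟩ := this
        have := hb i hi; omega
lemma alt_sum_choose_real (r N : ℕ) (h : r ≤ N) :
    ∑ j ∈ Finset.range (N + 1), (-1 : ℝ) ^ j * (r.choose j : ℝ)
      = if r = 0 then 1 else 0 := by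
  have := Int.alternating_sum_range_choose (n := r)
  have trunc : ∑ j ∈ Finset.range (N + 1), (-1 : ℝ) ^ j * (r.choose j : ℝ)
      = ∑ j ∈ Finset.range (r + 1), (-1 : ℝ) ^ j * (r.choose j : ℝ) := by
    apply (Finset.sum_subset (by intro x hx; simp at *; omega) ?_).symm
    intro x hx hnx
    simp only [Finset.mem_range] at hx hnx
    rw [Nat.choose_eq_zero_of_lt (by omega)]
    simp
  rw [trunc]
  have := congrArg (fun z : ℤ => (z : ℝ)) this
  push_cast at this
  rw [this]

lemma inversion (t s N : ℕ) (ht : t ≤ N) :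
    (if t = s then (1:ℝ) else 0)
      = ∑ k ∈ Finset.range (N + 1), (-1 : ℝ) ^ (k - s) * (k.choose s : ℝ) * (t.choose k : ℝ) := by
  by_cases hts : s ≤ t
  · have key : ∀ k ∈ Finset.range (N + 1), (-1 : ℝ) ^ (k - s) * (k.choose s : ℝ) * (t.choose k : ℝ)
        = if s ≤ k then (-1 : ℝ) ^ (k - s) * (k.choose s : ℝ) * (t.choose k : ℝ) else 0 := by
      intro k _
      split
      · rfl
      · rw [Nat.choose_eq_zero_of_lt (by omega)]; simp
    rw [Finset.sum_congr rfl key, Finset.sum_ite, Finset.sum_const_zero, add_zero]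
    have himg : Finset.filter (fun k => s ≤ k) (Finset.range (N+1))
        = (Finset.range (N + 1 - s)).image (fun j => s + j) := by
      ext k
      simp only [Finset.mem_filter, Finset.mem_range, Finset.mem_image]
      constructor
      · rintro ⟨h1, h2⟩; exact ⟨k - s, by omega, by omega⟩
      · rintro ⟨j, hj, rfl⟩; omega
    rw [himg, Finset.sum_image (by intro a _ b _ h; simp only at h; omega)]
    have term : ∀ j ∈ Finset.range (N + 1 - s),
        (-1 : ℝ) ^ (s + j - s) * ((s + j).choose s : ℝ) * (t.choose (s + j) : ℝ)
          = (t.choose s : ℝ) * ((-1 : ℝ) ^ j * ((t - s).choose j : ℝ)) := by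
      intro j _
      have hss : s + j - s = j := by omega
      rw [hss]
      by_cases hjt : s + j ≤ t
      · have h2 := Nat.choose_mul (n := t) (k := s + j) (s := s) (by omega)
        rw [hss] at h2
        have hcast : (t.choose (s+j) : ℝ) * (((s+j).choose s : ℕ) : ℝ) = (t.choose s : ℝ) * ((t-s).choose j : ℝ) := by
          exact_mod_cast h2
        rw [mul_assoc, mul_comm (((s+j).choose s : ℕ) : ℝ), hcast]
        ring
      · rw [Nat.choose_eq_zero_of_lt (show t < s + j by omega),
            Nat.choose_eq_zero_of_lt (show t - s < j by omega)]
        simp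
    rw [Finset.sum_congr rfl term, ← Finset.mul_sum]
    have : ∑ j ∈ Finset.range (N + 1 - s), (-1:ℝ)^j * ((t-s).choose j : ℝ)
        = if t - s = 0 then 1 else 0 := by
      have hNs : N + 1 - s = (N - s) + 1 := by omega
      rw [hNs]
      exact alt_sum_choose_real (t - s) (N - s) (by omega)
    rw [this]
    by_cases hts2 : t = s
    · subst hts2; simp
    · rw [if_neg hts2, if_neg (show ¬(t - s = 0) by omega)]; simp
  · rw [if_neg (by omega)]
    symm
    apply Finset.sum_eq_zero
    intro k _
    by_cases hks : s ≤ k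
    · rw [Nat.choose_eq_zero_of_lt (show t < k by omega)]; simp
    · rw [Nat.choose_eq_zero_of_lt (show k < s by omega)]; simp
lemma occursAt_ofFn_iff {α : Type*} {n : ℕ} (x : Fin n → α) (w : List α) (i : ℕ)
    (h : i + w.length ≤ n) :
    OccursAt (List.ofFn x) w i ↔
      ∀ j : ℕ, (hj : j < w.length) → x ⟨i + j, by omega⟩ = w[j] := by
  constructor
  · rintro ⟨-, heq⟩ j hj
    have h2 := List.getElem_of_eq heq.symm hj
    rw [List.getElem_take, List.getElem_drop, List.getElem_ofFn] at h2
    exact h2.symm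
  · intro hall
    refine ⟨by simpa using h, ?_⟩
    apply List.ext_getElem
    · simp [List.length_take, List.length_drop]; omega
    · intro j h1 h2
      have h1' : j < w.length := h2
      rw [List.getElem_take, List.getElem_drop, List.getElem_ofFn]
      exact hall j h1'

lemma occursAt_sub {α : Type*} {z w : List α} {i j L : ℕ} (hij : i ≤ j)
    (hL : j - i + w.length ≤ L) (h : OccursAt z w j) :
    OccursAt ((z.drop i).take L) w (j - i) := by
  obtain ⟨hb, heq⟩ := h
  have hlen : ((z.drop i).take L).length = min L (z.length - i) := by
    simp [List.length_take, List.length_drop]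
  constructor
  · rw [hlen]; omega
  · rw [List.drop_take, List.drop_drop, List.take_take]
    have : i + (j - i) = j := by omega
    rw [this]
    have : w.length ⊓ (L - (j - i)) = w.length := min_eq_left (by omega)
    rw [this, heq]

lemma no_close_occ {α : Type*} {w : List α} (hw : Nonoverlapping w) {z : List α} {i j : ℕ}
    (hij : i < j) (hd : j < i + w.length)
    (h1 : OccursAt z w i) (h2 : OccursAt z w j) : False := by
  apply hw
  refine ⟨(z.drop i).take (j - i + w.length), 0, j - i, ?_, ?_, ?_, ?_⟩
  · simp only [List.length_take, List.length_drop]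
    omega
  · omega
  · have := occursAt_sub (L := j - i + w.length) (le_refl i) (by omega) h1
    simpa using this
  · exact occursAt_sub (by omega) (by omega) h2
lemma pi_toReal {α : Type*} [Fintype α] [MeasurableSpace α] [MeasurableSingletonClass α]
    (μ : Measure α) [IsProbabilityMeasure μ] (n : ℕ) (A : Set (Fin n → α)) :
    ((Measure.pi fun _ : Fin n => μ) A).toReal
      = ∑ x ∈ Finset.univ.filter (· ∈ A), ∏ i, (μ {x i}).toReal := by
  have hA : A = ⋃ x ∈ Finset.univ.filter (· ∈ A), ({x} : Set (Fin n → α)) := by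
    ext y; simp
  conv_lhs => rw [hA]
  rw [measure_biUnion_finset ?_ (fun b _ => measurableSet_singleton b)]
  · rw [ENNReal.toReal_sum (fun a _ => measure_ne_top _ _)]
    apply Finset.sum_congr rfl
    intro x _
    rw [show ({x} : Set (Fin n → α)) = Set.univ.pi (fun i => {x i}) from
      (Set.univ_pi_singleton x).symm, Measure.pi_pi, ENNReal.toReal_prod]
  · intro x _ y _ hxy
    simp [Set.disjoint_singleton, hxy]

lemma sum_q_eq_one {α : Type*} [Fintype α] [MeasurableSpace α] [MeasurableSingletonClass α]
    (μ : Measure α) [IsProbabilityMeasure μ] :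
    ∑ a : α, (μ {a}).toReal = 1 := by
  have hU : (Set.univ : Set α) = ⋃ a ∈ (Finset.univ : Finset α), ({a} : Set α) := by
    ext y; simp
  have h1 : μ Set.univ = ∑ a : α, μ {a} := by
    rw [hU, measure_biUnion_finset ?_ (fun b _ => measurableSet_singleton b)]
    intro x _ y _ hxy
    simp [Set.disjoint_singleton, hxy]
  have := congrArg ENNReal.toReal h1
  rw [measure_univ, ENNReal.toReal_sum (fun a _ => measure_ne_top _ _)] at this
  simpa using this.symm
lemma wordProb_eq_prod {α : Type*} [MeasurableSpace α] (μ : Measure α) (w : List α) :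
    wordProb μ w = ∏ j : Fin w.length, (μ {w.get j}).toReal := by
  unfold wordProb
  conv_lhs => rw [show w = List.ofFn (fun i : Fin w.length => w.get i) from (List.ofFn_get w).symm]
  rw [List.map_ofFn, List.prod_ofFn]
  rfl

lemma key_S {α : Type*} [Fintype α] [MeasurableSpace α] [MeasurableSingletonClass α]
    (μ : Measure α) [IsProbabilityMeasure μ] (n : ℕ) (w : List α)
    (hw : Nonoverlapping w) (hm1 : 1 ≤ w.length) (S : Finset ℕ) :
    ∑ x : Fin n → α, (if ∀ i ∈ S, OccursAt (List.ofFn x) w i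
        then ∏ c, (μ {x c}).toReal else 0)
      = if ((∀ i ∈ S, i + w.length ≤ n) ∧ ∀ i ∈ S, ∀ j ∈ S, i < j → i + w.length ≤ j)
        then (wordProb μ w) ^ S.card else 0 := by
  by_cases hGood : ((∀ i ∈ S, i + w.length ≤ n) ∧ ∀ i ∈ S, ∀ j ∈ S, i < j → i + w.length ≤ j)
  case neg =>
    rw [if_neg hGood]
    apply Finset.sum_eq_zero
    intro x _
    rw [if_neg]
    intro hall
    apply hGood
    constructor
    · intro i hi
      have := (hall i hi).1
      simpa using this
    · intro i hi j hj hij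
      by_contra hlt
      exact no_close_occ hw hij (by omega) (hall i hi) (hall j hj)
  case pos =>
    rw [if_pos hGood]
    obtain ⟨hbnd, hspace⟩ := hGood
    -- uniqueness of window decomposition
    have huniq : ∀ i ∈ S, ∀ i' ∈ S, ∀ j j' : Fin w.length,
        i + (j : ℕ) = i' + (j' : ℕ) → i = i' ∧ (j : ℕ) = (j' : ℕ) := by
      intro i hi i' hi' j j' heq
      rcases lt_trichotomy i i' with h | h | h
      · have := hspace i hi i' hi' h
        have := j.isLt; have := j'.isLt; omega
      · exact ⟨h, by omega⟩
      · have := hspace i' hi' i hi h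
        have := j.isLt; have := j'.isLt; omega
    -- the factor function
    set f : Fin n → α → ℝ := fun c a =>
      if (∀ i ∈ S, ∀ j : Fin w.length, (c : ℕ) = i + (j : ℕ) → w.get j = a)
      then (μ {a}).toReal else 0 with hf
    -- Claim A
    have claimA : ∀ x : Fin n → α,
        (if ∀ i ∈ S, OccursAt (List.ofFn x) w i then ∏ c, (μ {x c}).toReal else 0)
          = ∏ c, f c (x c) := by
      intro x
      by_cases hocc : ∀ i ∈ S, OccursAt (List.ofFn x) w i
      · rw [if_pos hocc]
        apply Finset.prod_congr rfl
        intro c _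
        rw [hf]
        beta_reduce
        rw [if_pos]
        intro i hi j hcij
        have hocc' := (occursAt_ofFn_iff x w i (hbnd i hi)).1 (hocc i hi) (j : ℕ) j.isLt
        have hceq : c = ⟨i + (j : ℕ), by have := hbnd i hi; have := j.isLt; omega⟩ :=
          Fin.ext hcij
        rw [hceq, hocc']
        rfl
      · rw [if_neg hocc]
        push_neg at hocc
        obtain ⟨i, hi, hno⟩ := hocc
        rw [occursAt_ofFn_iff x w i (hbnd i hi)] at hno
        push_neg at hno
        obtain ⟨j, hj, hne⟩ := hno
        have hcn : i + j < n := by have := hbnd i hi; omega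
        symm
        apply Finset.prod_eq_zero (Finset.mem_univ (⟨i + j, hcn⟩ : Fin n))
        rw [hf]
        beta_reduce
        rw [if_neg]
        intro hcond
        have := hcond i hi ⟨j, hj⟩ rfl
        apply hne
        rw [← this]
        rfl
    rw [Finset.sum_congr rfl (fun x _ => claimA x)]
    -- Claim B: factorize
    have claimB : ∑ x : Fin n → α, ∏ c, f c (x c) = ∏ c, ∑ a, f c a := by
      rw [Finset.prod_univ_sum (fun _ => Finset.univ) f, Fintype.piFinset_univ]
    rw [claimB]
    -- evaluate each factor
    have claimC1 : ∀ (c : Fin n) (i : ℕ), i ∈ S → ∀ j : Fin w.length, (c : ℕ) = i + (j : ℕ) →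
        ∑ a, f c a = (μ {w.get j}).toReal := by
      intro c i hi j hcij
      have : ∀ a, f c a = if w.get j = a then (μ {a}).toReal else 0 := by
        intro a
        rw [hf]
        beta_reduce
        congr 1
        apply propext
        constructor
        · intro h; exact h i hi j hcij
        · intro h i' hi' j' hcij'
          obtain ⟨hii, hjj⟩ := huniq i hi i' hi' j j' (by omega)
          have : j = j' := Fin.ext hjj
          rw [← this]; exact h
      rw [Finset.sum_congr rfl (fun a _ => this a), Finset.sum_ite_eq Finset.univ (w.get j)]
      simp
    have claimC2 : ∀ c : Fin n, (¬ ∃ i ∈ S, ∃ j : Fin w.length, (c : ℕ) = i + (j : ℕ)) →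
        ∑ a, f c a = 1 := by
      intro c hc
      have : ∀ a, f c a = (μ {a}).toReal := by
        intro a
        rw [hf]
        beta_reduce
        rw [if_pos]
        intro i hi j hcij
        exact absurd ⟨i, hi, j, hcij⟩ hc
      rw [Finset.sum_congr rfl (fun a _ => this a)]
      exact sum_q_eq_one μ
    -- reduce to a product over ℕ
    set F : ℕ → ℝ := fun t => if ht : t < n then ∑ a, f ⟨t, ht⟩ a else 1 with hF
    have hFc : ∀ c : Fin n, ∑ a, f c a = F (c : ℕ) := by
      intro c
      rw [hF]
      simp only [Fin.is_lt, dif_pos, Fin.eta]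
    rw [Finset.prod_congr rfl (fun c _ => hFc c), Fin.prod_univ_eq_prod_range F n]
    -- the union of windows
    set T : Finset ℕ := S.biUnion
      (fun i => Finset.image (fun j : Fin w.length => i + (j : ℕ)) Finset.univ) with hT
    have hTsub : T ⊆ Finset.range n := by
      intro t ht
      rw [hT, Finset.mem_biUnion] at ht
      obtain ⟨i, hi, hmem⟩ := ht
      rw [Finset.mem_image] at hmem
      obtain ⟨j, -, rfl⟩ := hmem
      have := hbnd i hi; have := j.isLt
      rw [Finset.mem_range]; omega
    rw [← Finset.prod_sdiff hTsub]
    have hout : ∀ t ∈ Finset.range n \ T, F t = 1 := by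
      intro t ht
      rw [Finset.mem_sdiff, Finset.mem_range] at ht
      obtain ⟨htn, htT⟩ := ht
      rw [hF]
      simp only [dif_pos htn]
      apply claimC2
      rintro ⟨i, hi, j, hcij⟩
      apply htT
      rw [hT, Finset.mem_biUnion]
      exact ⟨i, hi, Finset.mem_image.2 ⟨j, Finset.mem_univ j, hcij.symm⟩⟩
    rw [Finset.prod_congr rfl hout, Finset.prod_const_one, one_mul]
    -- product over the union
    have hdisj : (↑S : Set ℕ).PairwiseDisjoint
        (fun i => Finset.image (fun j : Fin w.length => i + (j : ℕ)) Finset.univ) := by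
      intro i hi i' hi' hii'
      apply Finset.disjoint_left.2
      intro t ht ht'
      rw [Finset.mem_image] at ht ht'
      obtain ⟨j, -, hj⟩ := ht
      obtain ⟨j', -, hj'⟩ := ht'
      exact hii' (huniq i hi i' hi' j j' (by omega)).1
    rw [hT, Finset.prod_biUnion hdisj]
    have hwin : ∀ i ∈ S, ∏ t ∈ Finset.image (fun j : Fin w.length => i + (j : ℕ)) Finset.univ,
        F t = wordProb μ w := by
      intro i hi
      rw [Finset.prod_image (by
        intro a _ b _ h
        exact Fin.ext (by simp only at h; omega))]
      rw [wordProb_eq_prod]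
      apply Finset.prod_congr rfl
      intro j _
      have hin : i + (j : ℕ) < n := by have := hbnd i hi; have := j.isLt; omega
      rw [hF]
      simp only [dif_pos hin]
      exact claimC1 ⟨i + (j : ℕ), hin⟩ i hi j rfl
    rw [Finset.prod_congr rfl hwin, Finset.prod_const]
/-- Exact distribution of the number of occurrences of a nonoverlapping word `w`
of length `m` in an i.i.d. string of length `n`:
`P(N_w = s) = ∑_{k ≥ s, n - m k ≥ 0} (-1)^(k-s) C(n - m k + k, k) C(k, s) P(w)^k`. -/
theorem stmt3 {α : Type*} [Fintype α] [MeasurableSpace α] [MeasurableSingletonClass α]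
    (μ : Measure α) [IsProbabilityMeasure μ] (n m : ℕ) (w : List α)
    (hw : Nonoverlapping w) (hm : w.length = m) (hm1 : 1 ≤ m) (s : ℕ) :
    ((Measure.pi fun _ : Fin n => μ) {x | countOcc w (List.ofFn x) = s}).toReal
      = ∑ k ∈ Finset.range (n + 1),
          (if s ≤ k ∧ m * k ≤ n then
            (-1 : ℝ) ^ (k - s) * ((n - m * k + k).choose k : ℝ) * (k.choose s : ℝ)
              * (wordProb μ w) ^ k
          else 0) := by
  subst hm
  rw [pi_toReal, Finset.sum_filter]
  set occ : (Fin n → α) → Finset ℕ :=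
    fun x => (Finset.range n).filter (fun i => OccursAt (List.ofFn x) w i) with hocc
  have hcount : ∀ x : Fin n → α, countOcc w (List.ofFn x) = (occ x).card := by
    intro x
    rw [countOcc, hocc]
    simp [List.length_ofFn]
  have hcard_le : ∀ x : Fin n → α, (occ x).card ≤ n := by
    intro x
    calc (occ x).card ≤ (Finset.range n).card := Finset.card_le_card (Finset.filter_subset _ _)
    _ = n := Finset.card_range n
  -- step 2 : binomial inversion pointwise
  trans (∑ x : Fin n → α, ∑ k ∈ Finset.range (n + 1),
      (-1 : ℝ) ^ (k - s) * (k.choose s : ℝ) * (((occ x).card.choose k : ℝ)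
        * ∏ i, (μ {x i}).toReal))
  · apply Finset.sum_congr rfl
    intro x _
    trans ((∑ k ∈ Finset.range (n + 1),
        (-1 : ℝ) ^ (k - s) * (k.choose s : ℝ) * ((occ x).card.choose k : ℝ))
          * ∏ i, (μ {x i}).toReal)
    · rw [← inversion (occ x).card s n (hcard_le x)]
      by_cases hx : (occ x).card = s
      · have hx' : x ∈ {x : Fin n → α | countOcc w (List.ofFn x) = s} := by
          simp [Set.mem_setOf_eq, hcount x, hx]
        rw [if_pos hx', if_pos hx, one_mul]
      · have hx' : x ∉ {x : Fin n → α | countOcc w (List.ofFn x) = s} := by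
          simp [Set.mem_setOf_eq, hcount x, hx]
        rw [if_neg hx', if_neg hx, zero_mul]
    · rw [Finset.sum_mul]
      exact Finset.sum_congr rfl (fun k _ => by ring)
  refine Eq.trans Finset.sum_comm ?_
  apply Finset.sum_congr rfl
  intro k hk
  -- pull out the constants
  trans ((-1 : ℝ) ^ (k - s) * (k.choose s : ℝ)
      * ∑ x : Fin n → α, (((occ x).card.choose k : ℝ) * ∏ i, (μ {x i}).toReal))
  · rw [Finset.mul_sum]
  -- step 4 : the k-th binomial moment
  have step4a : ∀ x : Fin n → α, (((occ x).card.choose k : ℝ) * ∏ i, (μ {x i}).toReal)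
      = ∑ S ∈ Finset.powersetCard k (Finset.range n),
          (if ∀ i ∈ S, OccursAt (List.ofFn x) w i then ∏ i, (μ {x i}).toReal else 0) := by
    intro x
    have hfe : (Finset.powersetCard k (Finset.range n)).filter
          (fun S => ∀ i ∈ S, OccursAt (List.ofFn x) w i)
        = Finset.powersetCard k (occ x) := by
      ext S
      simp only [Finset.mem_filter, Finset.mem_powersetCard]
      constructor
      · rintro ⟨⟨h1, h2⟩, h3⟩
        refine ⟨fun i hi => ?_, h2⟩
        rw [hocc, Finset.mem_filter]
        exact ⟨h1 hi, h3 i hi⟩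
      · rintro ⟨h1, h2⟩
        have hsub : occ x ⊆ Finset.range n := Finset.filter_subset _ _
        refine ⟨⟨h1.trans hsub, h2⟩, fun i hi => ?_⟩
        have := h1 hi
        rw [hocc, Finset.mem_filter] at this
        exact this.2
    have hchoose : ((occ x).card.choose k : ℝ)
        = ∑ S ∈ Finset.powersetCard k (Finset.range n),
            (if ∀ i ∈ S, OccursAt (List.ofFn x) w i then (1:ℝ) else 0) := by
      rw [Finset.sum_ite, Finset.sum_const, Finset.sum_const_zero, add_zero, hfe,
        Finset.card_powersetCard]
      simp
    rw [hchoose, Finset.sum_mul]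
    apply Finset.sum_congr rfl
    intro S _
    by_cases hS : ∀ i ∈ S, OccursAt (List.ofFn x) w i
    · rw [if_pos hS, if_pos hS, one_mul]
    · rw [if_neg hS, if_neg hS, zero_mul]
  rw [Finset.sum_congr rfl (fun x _ => step4a x)]
  trans ((-1 : ℝ) ^ (k - s) * (k.choose s : ℝ)
      * ∑ S ∈ Finset.powersetCard k (Finset.range n), ∑ x : Fin n → α,
          (if ∀ i ∈ S, OccursAt (List.ofFn x) w i then ∏ i, (μ {x i}).toReal else 0))
  · exact congrArg _ Finset.sum_comm
  trans ((-1 : ℝ) ^ (k - s) * (k.choose s : ℝ)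
      * ∑ S ∈ Finset.powersetCard k (Finset.range n),
          (if ((∀ i ∈ S, i + w.length ≤ n) ∧ ∀ i ∈ S, ∀ j ∈ S, i < j → i + w.length ≤ j)
            then (wordProb μ w) ^ S.card else 0))
  · exact congrArg _ (Finset.sum_congr rfl (fun S _ => key_S μ n w hw hm1 S))
  -- count the good sets
  have step5 : ∑ S ∈ Finset.powersetCard k (Finset.range n),
      (if ((∀ i ∈ S, i + w.length ≤ n) ∧ ∀ i ∈ S, ∀ j ∈ S, i < j → i + w.length ≤ j)
        then (wordProb μ w) ^ S.card else 0)
      = ((spacedSets w.length n k).card : ℝ) * (wordProb μ w) ^ k := by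
    trans (∑ S ∈ spacedSets w.length n k, (wordProb μ w) ^ k)
    · rw [spacedSets, Finset.sum_filter]
      apply Finset.sum_congr rfl
      intro S hS
      have hcardS : S.card = k := (Finset.mem_powersetCard.1 hS).2
      rw [hcardS]
    · rw [Finset.sum_const, nsmul_eq_mul]
  rw [step5, spacedSets_card w.length hm1 n k]
  -- final arithmetic
  by_cases hsk : s ≤ k
  · by_cases hmk : w.length * k ≤ n
    · rw [if_pos hmk, if_pos ⟨hsk, hmk⟩]
      push_cast
      ring
    · rw [if_neg hmk, if_neg (by tauto)]
      simp
  · have h0 : (k.choose s : ℝ) = 0 := by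
      rw [Nat.choose_eq_zero_of_lt (by omega)]; simp
    rw [h0, if_neg (show ¬(s ≤ k ∧ w.length * k ≤ n) from fun h => hsk h.1)]
    ring
end

section
/- For every m >= 1 and n >= 0, the binary partial word 0^{m+1} (1 ?^m)^n 1 is nonoverlapping, i.e., the set of all its realizations is a nonoverlapping set of words. -/
open scoped Classical

/-- A pair of words `(x, y)` is nonoverlapping if no string `z` with
`|z| < |x| + |y|` contains an occurrence of `x` and a (different, if `x = y`)
occurrence of `y`. -/
def PairNonoverlapping {α : Type*} (x y : List α) : Prop :=
  ¬ ∃ (z : List α) (i j : ℕ), z.length < x.length + y.length ∧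
    OccursAt z x i ∧ OccursAt z y j ∧ (x ≠ y ∨ i ≠ j)

/-- A set of words is nonoverlapping if every pair of its elements (including a
word with itself) is nonoverlapping. -/
def SetNonoverlapping {α : Type*} (S : Set (List α)) : Prop :=
  ∀ x ∈ S, ∀ y ∈ S, PairNonoverlapping x y

/-- `w'` is a realization of the partial word `w` (letters `some a`, wildcard
`none` = `?`): same length and agreement at all non-wildcard positions. -/
def Realizes {α : Type*} (w : List (Option α)) (w' : List α) : Prop :=
  List.Forall₂ (fun o a => ∀ b, o = some b → a = b) w w'

/-- A partial word is nonoverlapping if the set of its realizations is a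
nonoverlapping set of words. -/
def PartialNonoverlapping {α : Type*} (w : List (Option α)) : Prop :=
  SetNonoverlapping {w' | Realizes w w'}

namespace Stmt10Aux

variable (m n : ℕ)

def blk : List (Option Bool) := (some true) :: List.replicate m (none : Option Bool)

def W : List (Option Bool) :=
  List.replicate (m + 1) (some false) ++ (List.replicate n (blk m)).flatten ++ [some true]

lemma blk_length : (blk m).length = m + 1 := by simp [blk]

lemma flat_length : ((List.replicate n (blk m)).flatten).length = n * (m + 1) := by
  induction n with
  | zero => simp
  | succ k ih => simp [List.replicate_succ, List.flatten_cons, ih, blk_length]; ring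

lemma W_length : (W m n).length = (m + 1) + n * (m + 1) + 1 := by
  simp [W, flat_length, blk_length]; ring

lemma flat_get (q : ℕ) (hq : q < n) :
    ((List.replicate n (blk m)).flatten)[q * (m + 1)]? = some (some true) := by
  induction n generalizing q with
  | zero => omega
  | succ k ih =>
    rw [List.replicate_succ, List.flatten_cons]
    rcases Nat.eq_zero_or_pos q with rfl | hq0
    · rw [List.getElem?_append_left (by simp [blk_length])]
      simp [blk]
    · rw [List.getElem?_append_right (by rw [blk_length]; nlinarith)]
      rw [blk_length]
      have : q * (m + 1) - (m + 1) = (q - 1) * (m + 1) := by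
        cases q with
        | zero => omega
        | succ q' => simp [Nat.succ_mul]
      rw [this]
      exact ih (q - 1) (by omega)

lemma W_get0 (t : ℕ) (ht : t ≤ m) : (W m n)[t]? = some (some false) := by
  rw [W, List.getElem?_append_left (by simp [flat_length]; nlinarith),
    List.getElem?_append_left (by simp; omega)]
  simp [ht, Nat.lt_succ_of_le ht]

lemma W_get1 (p : ℕ) (hp1 : 1 ≤ p) (hp2 : p ≤ n + 1) :
    (W m n)[p * (m + 1)]? = some (some true) := by
  rw [W]
  rcases eq_or_lt_of_le hp2 with rfl | hp2'
  · have hlen : (List.replicate (m + 1) (some false : Option Bool)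
        ++ (List.replicate n (blk m)).flatten).length = (n + 1) * (m + 1) := by
      simp [flat_length, blk_length]; ring
    rw [← hlen, List.getElem?_concat_length]
  · have hp2'' : p ≤ n := by omega
    rw [List.getElem?_append_left (by simp [flat_length, blk_length]; nlinarith)]
    rw [List.getElem?_append_right (by simp; nlinarith)]
    have : p * (m + 1) - (List.replicate (m + 1) (some false : Option Bool)).length
        = (p - 1) * (m + 1) := by
      simp; cases p with
      | zero => omega
      | succ p' => simp [Nat.succ_mul]
    rw [this]
    exact flat_get m n (p - 1) (by omega)

lemma real_get {w : List (Option Bool)} {x : List Bool} (h : Realizes w x)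
    (t : ℕ) (b : Bool) (hw : w[t]? = some (some b)) : x[t]? = some b := by
  rw [Realizes, List.forall₂_iff_get] at h
  obtain ⟨hlen, hget⟩ := h
  have ht : t < w.length := by
    by_contra hc
    rw [List.getElem?_eq_none (by omega)] at hw
    exact (Option.some_ne_none _ hw.symm)
  have ht' : t < x.length := by omega
  have := hget t ht ht' b
  rw [List.getElem?_eq_getElem ht] at hw
  rw [List.getElem?_eq_getElem ht']
  simp only [List.get_eq_getElem] at this
  exact congrArg some (this (by exact_mod_cast Option.some.inj hw))

lemma real_length {w : List (Option Bool)} {x : List Bool} (h : Realizes w x) :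
    x.length = w.length := (List.Forall₂.length_eq h).symm

lemma occ_get {z x : List Bool} {i : ℕ} (h : OccursAt z x i) (t : ℕ)
    (ht : t < x.length) : x[t]? = z[i + t]? := by
  obtain ⟨h1, h2⟩ := h
  conv_lhs => rw [← h2]
  rw [List.getElem?_take, if_pos ht, List.getElem?_drop]

lemma key {x y z : List Bool} {i j : ℕ} (hm : 1 ≤ m)
    (hx : Realizes (W m n) x) (hy : Realizes (W m n) y)
    (hz : z.length < x.length + y.length)
    (hxi : OccursAt z x i) (hyj : OccursAt z y j) (hij : i < j) : False := by
  set L := (m + 1) + n * (m + 1) + 1 with hL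
  have hLe : L = (n + 1) * (m + 1) + 1 := by rw [hL]; ring
  have hxL : x.length = L := by rw [real_length hx, W_length]
  have hyL : y.length = L := by rw [real_length hy, W_length]
  set d := j - i with hd
  have hd1 : 1 ≤ d := by omega
  have hjz : j + L ≤ z.length := by rw [← hyL]; exact hyj.1
  have hzL : z.length < L + L := by rw [hxL, hyL] at hz; exact hz
  have hdL : d < L := by omega
  have rel : ∀ k, k + d < L → x[k + d]? = y[k]? := by
    intro k hk
    rw [occ_get hxi (k + d) (by omega), occ_get hyj k (by omega)]
    congr 1
    omega
  have xval1 : ∀ p, 1 ≤ p → p ≤ n + 1 → x[p * (m + 1)]? = some true :=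
    fun p h1 h2 => real_get hx _ _ (W_get1 m n p h1 h2)
  have yval0 : ∀ t, t ≤ m → y[t]? = some false :=
    fun t ht => real_get hy _ _ (W_get0 m n t ht)
  obtain ⟨q, r, hrm, hdqr⟩ : ∃ q r, r ≤ m ∧ d = q * (m + 1) + r :=
    ⟨d / (m + 1), d % (m + 1),
      by have := Nat.mod_lt d (show 0 < m + 1 by omega); omega,
      (Nat.div_add_mod' d (m + 1)).symm⟩
  have hmul : ∀ a b : ℕ, a * (m + 1) < b * (m + 1) + 1 → a ≤ b := by
    intro a b h
    by_contra hc
    push_neg at hc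
    have h2 : (b + 1) * (m + 1) ≤ a * (m + 1) := Nat.mul_le_mul_right _ hc
    have h3 : (b + 1) * (m + 1) = b * (m + 1) + (m + 1) := by ring
    omega
  have hq2 : q ≤ n + 1 := hmul q (n + 1) (by omega)
  rcases Nat.eq_zero_or_pos r with hr0 | hr1
  · -- d = q * (m+1), 1 ≤ q ≤ n+1
    have hq1 : 1 ≤ q := by
      by_contra hc
      have h0 : q = 0 := by omega
      subst h0
      rw [Nat.zero_mul] at hdqr
      omega
    have h1 := rel 0 (by omega)
    rw [Nat.zero_add] at h1
    have h2 : x[d]? = some true := by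
      rw [hdqr, hr0, Nat.add_zero]
      exact xval1 q hq1 hq2
    rw [h2, yval0 0 (by omega)] at h1
    exact Bool.noConfusion (Option.some.inj h1)
  · -- r ≥ 1, take k = (m+1) - r
    have hqn : q ≤ n := by
      by_contra hc
      have h0 : q = n + 1 := by omega
      subst h0
      omega
    have hk : (m + 1 - r) + d = (q + 1) * (m + 1) := by
      have e : (q + 1) * (m + 1) = q * (m + 1) + (m + 1) := by ring
      omega
    have hbound : (q + 1) * (m + 1) < L := by
      have h2 : (q + 1) * (m + 1) ≤ (n + 1) * (m + 1) :=
        Nat.mul_le_mul_right _ (by omega)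
      omega
    have h1 := rel (m + 1 - r) (by omega)
    rw [hk] at h1
    rw [xval1 (q + 1) (by omega) (by omega), yval0 (m + 1 - r) (by omega)] at h1
    exact Bool.noConfusion (Option.some.inj h1)

end Stmt10Aux

/-- For every `m ≥ 1` and `n ≥ 0`, the binary partial word `0^(m+1) (1 ?^m)^n 1`
is nonoverlapping. -/
theorem stmt10 (m n : ℕ) (hm : 1 ≤ m) :
    PartialNonoverlapping
      (List.replicate (m + 1) (some false)
        ++ (List.replicate n
              ((some true) :: List.replicate m (none : Option Bool))).flatten
        ++ [some true]) := by
  have hW : (List.replicate (m + 1) (some false)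
        ++ (List.replicate n
              ((some true) :: List.replicate m (none : Option Bool))).flatten
        ++ [some true]) = Stmt10Aux.W m n := rfl
  rw [hW]
  intro x hx y hy
  simp only [Set.mem_setOf_eq] at hx hy
  rintro ⟨z, i, j, hz, hxi, hyj, hne⟩
  rcases lt_trichotomy i j with hij | hij | hij
  · exact Stmt10Aux.key m n hm hx hy hz hxi hyj hij
  · -- i = j, then x = y
    subst hij
    have hxL : x.length = y.length := by
      rw [Stmt10Aux.real_length hx, Stmt10Aux.real_length hy]
    have : x = y := by
      rw [← hxi.2, ← hyj.2, hxL]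
    rcases hne with h | h
    · exact h this
    · exact h rfl
  · exact Stmt10Aux.key m n hm hy hx (by omega) hyj hxi hij
end

section
/- For every m >= 1, the binary partial word w(m) = 0^m (1 ?^{m-1})^{m-1} 1 is nonoverlapping, has length m^2 + 1, and under the fair-coin measure P(w(m)) = 2^{-2m}. -/
open scoped Classical

def Wfun (m i : ℕ) : Option Bool :=
  if i < m then some false else if m ∣ i then some true else none

lemma flat_get {α : Type*} (b : List α) (n p : ℕ) (hp : p < n * b.length) :
    ((List.replicate n b).flatten)[p]? = b[p % b.length]? := by
  induction n generalizing p with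
  | zero => omega
  | succ k ih =>
    have hmul : (k+1) * b.length = k * b.length + b.length := by ring
    rw [hmul] at hp
    rw [List.replicate_succ, List.flatten_cons]
    by_cases h : p < b.length
    · rw [List.getElem?_append_left h, Nat.mod_eq_of_lt h]
    · push_neg at h
      rw [List.getElem?_append_right h, ih _ (by omega)]
      congr 1
      conv_rhs => rw [show p = (p - b.length) + 1 * b.length by omega]
      rw [Nat.add_mul_mod_self_right]

lemma wlen (m : ℕ) (hm : 1 ≤ m) :
    (List.replicate m (some false)
        ++ (List.replicate (m - 1)
              ((some true) :: List.replicate (m - 1) (none : Option Bool))).flatten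
        ++ [some true]).length = m ^ 2 + 1 := by
  obtain ⟨k, rfl⟩ : ∃ k, m = k + 1 := ⟨m - 1, by omega⟩
  simp [List.length_flatten, List.map_replicate, List.sum_replicate]
  ring

lemma wget (m : ℕ) (hm : 1 ≤ m) (i : ℕ) (hi : i < m ^ 2 + 1) :
    (List.replicate m (some false)
        ++ (List.replicate (m - 1)
              ((some true) :: List.replicate (m - 1) (none : Option Bool))).flatten
        ++ [some true])[i]? = some (Wfun m i) := by
  set blk : List (Option Bool) := (some true) :: List.replicate (m - 1) none with hblk
  have hbl : blk.length = m := by simp [hblk]; omega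
  have hfl : ((List.replicate (m - 1) blk).flatten).length = (m - 1) * m := by
    simp [List.length_flatten, List.map_replicate, List.sum_replicate, hbl]
  have hm2 : m + (m-1)*m = m^2 := by
    obtain ⟨k, rfl⟩ : ∃ k, m = k + 1 := ⟨m - 1, by omega⟩
    simp; ring
  have hab : (List.replicate m (some false : Option Bool)
      ++ (List.replicate (m - 1) blk).flatten).length = m ^ 2 := by
    rw [List.length_append, List.length_replicate, hfl, hm2]
  have hnotlt : ¬ (m ^ 2 ≤ m - 1) := by nlinarith [Nat.sub_le m 1]
  by_cases h1 : i < m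
  · rw [List.getElem?_append_left (by rw [hab]; omega),
      List.getElem?_append_left (by simpa using h1), List.getElem?_replicate, if_pos h1]
    simp [Wfun, h1]
  · push_neg at h1
    by_cases h2 : i < m ^ 2
    · rw [List.getElem?_append_left (by rw [hab]; omega),
        List.getElem?_append_right (by simpa using h1)]
      simp only [List.length_replicate]
      rw [flat_get blk _ _ (by rw [hbl]; omega)]
      rw [hbl, hblk, List.getElem?_cons]
      have hmod : (i - m) % m = i % m := by
        conv_rhs => rw [show i = (i - m) + 1 * m by omega]
        rw [Nat.add_mul_mod_self_right]
      rw [hmod]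
      have hdvd : i % m = 0 ↔ m ∣ i := Nat.dvd_iff_mod_eq_zero.symm
      by_cases h3 : i % m = 0
      · rw [if_pos h3]
        simp [Wfun, hdvd.mp h3, Nat.not_lt.mpr h1]
      · rw [if_neg h3, List.getElem?_replicate,
          if_pos (by have := Nat.mod_lt i (show 0 < m by omega); omega)]
        simp only [Wfun, Nat.not_lt.mpr h1, if_false, if_neg (fun h => h3 (hdvd.mpr h))]
    · have h4 : i = m ^ 2 := by omega
      rw [List.getElem?_append_right (by rw [hab]; omega), hab]
      rw [show i - m ^ 2 = 0 by omega]
      have hd : m ∣ i := by rw [h4]; exact ⟨m, (sq m)⟩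
      simp [Wfun, Nat.not_lt.mpr h1, hd]

lemma key (m d : ℕ) (hm : 1 ≤ m) (hd1 : 1 ≤ d) (hd2 : d ≤ m ^ 2) :
    ∃ k, k < m ∧ Wfun m k = some false ∧ Wfun m (k + d) = some true ∧ k + d ≤ m ^ 2 := by
  have hmm : m ^ 2 = m * m := sq m
  by_cases h : m ∣ d
  · refine ⟨0, by omega, by simp [Wfun]; omega, ?_, by omega⟩
    have hdm : m ≤ d := Nat.le_of_dvd (by omega) h
    simp only [Wfun, zero_add, if_neg (by omega : ¬ d < m), if_pos h]
  · have hr : d % m ≠ 0 := fun h0 => h (Nat.dvd_of_mod_eq_zero h0)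
    have hrlt : d % m < m := Nat.mod_lt d (by omega)
    refine ⟨m - d % m, by omega, by simp [Wfun]; omega, ?_, ?_⟩
    · have hdm : m * (d / m) + d % m = d := Nat.div_add_mod d m
      have heq : m - d % m + d = m * (d / m + 1) := by
        rw [Nat.mul_add, Nat.mul_one]; omega
      have hdvd : m ∣ (m - d % m + d) := ⟨d / m + 1, heq⟩
      simp only [Wfun, if_neg (by omega : ¬ (m - d % m + d < m)), if_pos hdvd]
    · have hdm : m * (d / m) + d % m = d := Nat.div_add_mod d m
      have hlt : d < m * m := by
        rcases Nat.lt_or_ge d (m * m) with h' | h'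
        · exact h'
        · exfalso; have : d = m * m := by omega
          exact h (this ▸ Dvd.intro m rfl)
      have : d / m < m := (Nat.div_lt_iff_lt_mul (by omega)).mpr (by omega)
      have heq : m - d % m + d = m * (d / m + 1) := by
        rw [Nat.mul_add, Nat.mul_one]; omega
      rw [heq, hmm]
      exact Nat.mul_le_mul_left m (by omega)

lemma realizes_getElem? {w : List (Option Bool)} {x : List Bool}
    (h : Realizes w x) (p : ℕ) (b : Bool) (hp : p < w.length)
    (hw : w[p]? = some (some b)) : x[p]? = some b := by
  rw [Realizes, List.forall₂_iff_get] at h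
  obtain ⟨hlen, hpt⟩ := h
  have hp2 : p < x.length := hlen ▸ hp
  have := hpt p hp hp2 b (by
    have := List.getElem?_eq_getElem hp
    rw [hw] at this
    simpa using this.symm)
  rw [List.getElem?_eq_getElem hp2]
  simp [List.get_eq_getElem] at this ⊢
  exact this

lemma realizes_length {w : List (Option Bool)} {x : List Bool} (h : Realizes w x) :
    x.length = w.length := (List.forall₂_iff_get.mp (by exact h)).1.symm

lemma occurs_getElem? {z x : List Bool} {i : ℕ} (h : OccursAt z x i) (p : ℕ)
    (hp : p < x.length) : z[i + p]? = x[p]? := by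
  obtain ⟨h1, h2⟩ := h
  conv_rhs => rw [← h2]
  rw [List.getElem?_take, if_pos hp, List.getElem?_drop]

lemma overlap_false (m : ℕ) (hm : 1 ≤ m) (w : List (Option Bool))
    (hlen : w.length = m ^ 2 + 1) (hget : ∀ i < m ^ 2 + 1, w[i]? = some (Wfun m i))
    (x y z : List Bool) (i j : ℕ) (hx : Realizes w x) (hy : Realizes w y)
    (ox : OccursAt z x i) (oy : OccursAt z y j) (hij : i < j)
    (hz : z.length < x.length + y.length) : False := by
  have hxl : x.length = m ^ 2 + 1 := (realizes_length hx).trans hlen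
  have hyl : y.length = m ^ 2 + 1 := (realizes_length hy).trans hlen
  set d := j - i with hd
  have hd1 : 1 ≤ d := by omega
  have hd2 : d ≤ m ^ 2 := by
    have := oy.1
    have := ox.1
    omega
  obtain ⟨k, hk, hwk, hwkd, hkd⟩ := key m d hm hd1 hd2
  have hmle : m ≤ m ^ 2 := by nlinarith
  have hyk : y[k]? = some false :=
    realizes_getElem? hy k false (by omega) (by rw [hget k (by omega), hwk])
  have hxkd : x[k + d]? = some true :=
    realizes_getElem? hx (k + d) true (by omega) (by rw [hget (k + d) (by omega), hwkd])
  have e1 : z[j + k]? = some false := by rw [occurs_getElem? oy k (by omega)]; exact hyk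
  have e2 : z[i + (k + d)]? = some true := by
    rw [occurs_getElem? ox (k + d) (by omega)]; exact hxkd
  rw [show i + (k + d) = j + k by omega, e1] at e2
  simp at e2

lemma realizes_ofFn_iff (m : ℕ) (w : List (Option Bool))
    (hlen : w.length = m ^ 2 + 1)
    (hget : ∀ i < m ^ 2 + 1, w[i]? = some (Wfun m i))
    (f : Fin w.length → Bool) :
    Realizes w (List.ofFn f) ↔
      ∀ i : Fin w.length, (Wfun m i.val = none ∨ Wfun m i.val = some (f i)) := by
  have hwi : ∀ (i : ℕ) (h : i < w.length), w[i] = Wfun m i := by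
    intro i h
    have := hget i (hlen ▸ h)
    rw [List.getElem?_eq_getElem h] at this
    exact Option.some.inj this
  rw [Realizes, List.forall₂_iff_get]
  constructor
  · rintro ⟨-, hpt⟩ i
    have h2 : (i : ℕ) < (List.ofFn f).length := by simp
    have := hpt i i.isLt h2
    simp only [List.get_eq_getElem, hwi i i.isLt, List.getElem_ofFn] at this
    rcases ho : Wfun m i.val with _ | c
    · exact Or.inl rfl
    · right
      rw [ho] at this
      have := this c rfl
      simp [this, Fin.eta]
  · intro h
    refine ⟨by simp, ?_⟩
    intro i h1 h2 b hb
    simp only [List.get_eq_getElem, hwi i h1] at hb ⊢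
    rcases h ⟨i, h1⟩ with ho | ho
    · rw [ho] at hb; cases hb
    · rw [ho] at hb
      rw [List.getElem_ofFn]
      exact Option.some.inj hb

lemma count_defined (m : ℕ) (hm : 1 ≤ m) :
    (((Finset.range (m ^ 2 + 1)).filter fun i => Wfun m i = none)).card
      = (m - 1) ^ 2 := by
  have hmm : m ^ 2 = m * m := sq m
  have hfil : ((Finset.range (m ^ 2 + 1)).filter fun i => ¬ Wfun m i = none)
      = ((Finset.range (m ^ 2 + 1)).filter fun i => i < m ∨ m ∣ i) := by
    apply Finset.filter_congr
    intro i _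
    simp only [Wfun, eq_iff_iff]
    by_cases h1 : i < m
    · simp [h1]
    · by_cases h2 : m ∣ i <;> simp [h1, h2]
  have hsplit : ((Finset.range (m ^ 2 + 1)).filter fun i => i < m ∨ m ∣ i)
      = ((Finset.range (m ^ 2 + 1)).filter fun i => i < m)
        ∪ ((Finset.range (m ^ 2 + 1)).filter fun i => m ∣ i) :=
    Finset.filter_or _ _ _
  have hA : ((Finset.range (m ^ 2 + 1)).filter fun i => i < m) = Finset.range m := by
    ext i
    simp only [Finset.mem_filter, Finset.mem_range]
    constructor
    · rintro ⟨-, h⟩; exact h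
    · intro h; exact ⟨by nlinarith, h⟩
  have hB : ((Finset.range (m ^ 2 + 1)).filter fun i => m ∣ i)
      = (Finset.range (m + 1)).image (· * m) := by
    ext i
    simp only [Finset.mem_filter, Finset.mem_range, Finset.mem_image]
    constructor
    · rintro ⟨hlt, t, rfl⟩
      refine ⟨t, ?_, by ring⟩
      by_contra hc
      push_neg at hc
      have : m * (m + 1) ≤ m * t := Nat.mul_le_mul_left m hc
      nlinarith
    · rintro ⟨j, hj, rfl⟩
      exact ⟨by nlinarith, j, by ring⟩
  have hAB : (Finset.range m ∩ (Finset.range (m + 1)).image (· * m)) = {0} := by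
    ext i
    simp only [Finset.mem_inter, Finset.mem_range, Finset.mem_image,
      Finset.mem_singleton]
    constructor
    · rintro ⟨hlt, j, hj, rfl⟩
      rcases Nat.eq_zero_or_pos j with rfl | hp
      · simp
      · nlinarith
    · rintro rfl
      exact ⟨by omega, 0, by omega, by ring⟩
  have hcardB : ((Finset.range (m + 1)).image (· * m)).card = m + 1 := by
    rw [Finset.card_image_of_injective _
      (fun a b h => Nat.eq_of_mul_eq_mul_right (by omega) h), Finset.card_range]
  have hcardU : (Finset.range m ∪ (Finset.range (m + 1)).image (· * m)).card = 2 * m := by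
    have := Finset.card_union_add_card_inter (Finset.range m)
      ((Finset.range (m + 1)).image (· * m))
    rw [hAB, hcardB, Finset.card_range, Finset.card_singleton] at this
    omega
  have htot := Finset.card_filter_add_card_filter_not
    (s := Finset.range (m ^ 2 + 1)) (p := fun i => Wfun m i = none)
  rw [Finset.card_range, hfil, hsplit, hA, hB, hcardU] at htot
  have : (m - 1) ^ 2 + 2 * m = m ^ 2 + 1 := by
    obtain ⟨k, rfl⟩ : ∃ k, m = k + 1 := ⟨m - 1, by omega⟩
    simp; ring
  omega

lemma prob_part (m : ℕ) (hm : 1 ≤ m) (w : List (Option Bool))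
    (hlen : w.length = m ^ 2 + 1)
    (hget : ∀ i < m ^ 2 + 1, w[i]? = some (Wfun m i)) :
    (∑ f : Fin w.length → Bool,
        if Realizes w (List.ofFn f) then ((1 : ℝ) / 2) ^ w.length else 0)
      = ((1 : ℝ) / 2) ^ (2 * m) := by
  have hsum : ∀ f : Fin w.length → Bool,
      (if Realizes w (List.ofFn f) then ((1:ℝ)/2) ^ w.length else 0)
      = ((1:ℝ)/2) ^ w.length * ∏ i : Fin w.length,
          (if (Wfun m i.val = none ∨ Wfun m i.val = some (f i)) then (1:ℝ) else 0) := by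
    intro f
    rw [Finset.prod_boole]
    by_cases h : Realizes w (List.ofFn f)
    · rw [if_pos h, if_pos, mul_one]
      intro i _
      exact (realizes_ofFn_iff m w hlen hget f).mp h i
    · rw [if_neg h, if_neg, mul_zero]
      intro hc
      exact h ((realizes_ofFn_iff m w hlen hget f).mpr
        (fun i => hc i (Finset.mem_univ i)))
  rw [Finset.sum_congr rfl (fun f _ => hsum f), ← Finset.mul_sum]
  have hswap : (∑ f : Fin w.length → Bool, ∏ i : Fin w.length,
        (if (Wfun m i.val = none ∨ Wfun m i.val = some (f i)) then (1:ℝ) else 0))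
      = ∏ i : Fin w.length, ∑ b : Bool,
        (if (Wfun m i.val = none ∨ Wfun m i.val = some b) then (1:ℝ) else 0) := by
    rw [Finset.prod_univ_sum, Fintype.piFinset_univ]
  rw [hswap]
  have hinner : ∀ i : Fin w.length,
      (∑ b : Bool, (if (Wfun m i.val = none ∨ Wfun m i.val = some b) then (1:ℝ) else 0))
      = if Wfun m i.val = none then (2:ℝ) else 1 := by
    intro i
    rw [Fintype.sum_bool]
    rcases h : Wfun m i.val with _ | c
    · norm_num
    · cases c <;> simp [h] <;> norm_num
  rw [Finset.prod_congr rfl (fun i _ => hinner i), Finset.prod_ite,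
    Finset.prod_const, Finset.prod_const, one_pow, mul_one]
  have hcard : (Finset.univ.filter fun i : Fin w.length => Wfun m i.val = none).card
      = (m - 1) ^ 2 := by
    rw [Finset.card_filter]
    rw [Fin.sum_univ_eq_sum_range (fun i => if Wfun m i = none then 1 else 0) w.length]
    rw [← Finset.card_filter, hlen, count_defined m hm]
  rw [hcard]
  have hexp : w.length = (m - 1) ^ 2 + 2 * m := by
    have : (m - 1) ^ 2 + 2 * m = m ^ 2 + 1 := by
      obtain ⟨k, rfl⟩ : ∃ k, m = k + 1 := ⟨m - 1, by omega⟩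
      simp; ring
    omega
  rw [hexp, pow_add]
  have hone : ((1:ℝ)/2) ^ ((m-1)^2) * 2 ^ ((m-1)^2) = 1 := by
    rw [← mul_pow]; norm_num
  calc ((1:ℝ)/2) ^ ((m-1)^2) * (1/2) ^ (2*m) * 2 ^ ((m-1)^2)
      = (((1:ℝ)/2) ^ ((m-1)^2) * 2 ^ ((m-1)^2)) * (1/2) ^ (2*m) := by ring
    _ = (1/2) ^ (2*m) := by rw [hone, one_mul]

/-- For `m ≥ 1`, the binary partial word `w(m) = 0^m (1 ?^(m-1))^(m-1) 1` is
nonoverlapping, has length `m² + 1`, and under the fair-coin measure the sum of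
the probabilities of its realizations equals `2^(-2m)`. -/
theorem stmt11 (m : ℕ) (hm : 1 ≤ m)
    (w : List (Option Bool))
    (hw : w = List.replicate m (some false)
        ++ (List.replicate (m - 1)
              ((some true) :: List.replicate (m - 1) (none : Option Bool))).flatten
        ++ [some true]) :
    PartialNonoverlapping w ∧ w.length = m ^ 2 + 1 ∧
      (∑ f : Fin w.length → Bool,
        if Realizes w (List.ofFn f) then ((1 : ℝ) / 2) ^ w.length else 0)
        = ((1 : ℝ) / 2) ^ (2 * m) := by
  subst hw
  have hlen := wlen m hm
  have hget : ∀ i < m ^ 2 + 1,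
      (List.replicate m (some false)
        ++ (List.replicate (m - 1)
              ((some true) :: List.replicate (m - 1) (none : Option Bool))).flatten
        ++ [some true])[i]? = some (Wfun m i) := fun i hi => wget m hm i hi
  refine ⟨?_, hlen, prob_part m hm _ hlen hget⟩
  intro x hx y hy
  have hx' : Realizes _ x := hx
  have hy' : Realizes _ y := hy
  rintro ⟨z, i, j, hz, ox, oy, hxy⟩
  rcases lt_trichotomy i j with h | h | h
  · exact overlap_false m hm _ hlen hget x y z i j hx' hy' ox oy h hz
  · subst h
    have hxl : x.length = y.length := by
      rw [realizes_length hx', realizes_length hy']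
    have hxy' : x = y := by rw [← ox.2, ← oy.2, hxl]
    rcases hxy with h' | h'
    · exact h' hxy'
    · exact h' rfl
  · exact overlap_false m hm _ hlen hget y x z j i hy' hx' oy ox h (by omega)
end
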